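/- arXiv:2102.04203 — 2 statements merged into one kernel-verified Lean document; each statement's English description precedes it below -/
import Mathlib

section
/- Let G be a (possibly infinite) graph, let s, t ∈ V(G) be distinct, and let 𝒫 and 𝒬 be systems of pairwise edge-disjoint st-paths. Then there exists a system ℛ of pairwise edge-disjoint st-paths such that the set of first edges (edges at s) of ℛ contains the set of first edges of 𝒫 and the set of last edges (edges at t) of ℛ contains the set of last edges of 𝒬. -/
/-!
Common definitions: multigraphs (parallel edges allowed, no loops), walks,
paths, cuts, waves and related notions used in the statements below.
-/

universe u v

/-- A multigraph with vertex type `V` and edge type `E`: every edge is assigned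
an unordered pair of *distinct* end-vertices (parallel edges allowed, no loops). -/
structure Multigraph (V : Type u) (E : Type v) : Type (max u v) where
  inc : E → Sym2 V
  not_isDiag : ∀ e, ¬ (inc e).IsDiag

namespace Multigraph

variable {V : Type u} {E : Type v}

/-- Walks in a multigraph, recorded together with the edges they traverse. -/
inductive Walk (G : Multigraph V E) : V → V → Type (max u v)
  | nil (v : V) : Walk G v v
  | cons {u v w : V} (e : E) (he : G.inc e = s(u, v)) (p : Walk G v w) : Walk G u w

namespace Walk

variable {G : Multigraph V E}

/-- The list of vertices visited by a walk. -/
def support : ∀ {u w : V}, G.Walk u w → List V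
  | _, _, .nil v => [v]
  | u, _, .cons _ _ p => u :: p.support

/-- The list of edges traversed by a walk. -/
def edges : ∀ {u w : V}, G.Walk u w → List E
  | _, _, .nil _ => []
  | _, _, .cons e _ p => e :: p.edges

end Walk

/-- `δ_G(v)`: the set of edges incident with the vertex `v`. -/
def inci (G : Multigraph V E) (v : V) : Set E := {e | v ∈ G.inc e}

/-- `δ_G(X)`: the set of edges with exactly one end-vertex in `X`. -/
def cut (G : Multigraph V E) (X : Set V) : Set E :=
  {e | ∃ x y, G.inc e = s(x, y) ∧ x ∈ X ∧ y ∉ X}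

/-- Connectedness of a multigraph. -/
def Connected (G : Multigraph V E) : Prop := ∀ u v : V, Nonempty (G.Walk u v)

/-- A `T`-path: a path connecting two distinct vertices of `T`
with no internal vertex in `T`. -/
structure TPath (G : Multigraph V E) (T : Set V) : Type (max u v) where
  first : V
  last : V
  walk : G.Walk first last
  first_mem : first ∈ T
  last_mem : last ∈ T
  ne : first ≠ last
  support_nodup : walk.support.Nodup
  internal : ∀ x ∈ walk.support, x ∈ T → x = first ∨ x = last

/-- A system of pairwise edge-disjoint `T`-paths. -/
def TPathDisjoint (G : Multigraph V E) {T : Set V} (P : Set (G.TPath T)) : Prop :=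
  ∀ p ∈ P, ∀ q ∈ P, p ≠ q → ∀ e, e ∈ p.walk.edges → e ∉ q.walk.edges

/-- An `st`-path: a path from `s` to `t` (no internal vertex is `s` or `t`,
which is automatic as the vertices of a path are distinct). -/
structure STPath (G : Multigraph V E) (s t : V) : Type (max u v) where
  walk : G.Walk s t
  support_nodup : walk.support.Nodup

/-- A system of pairwise edge-disjoint `st`-paths. -/
def STPathDisjoint (G : Multigraph V E) {s t : V} (P : Set (G.STPath s t)) : Prop :=
  ∀ p ∈ P, ∀ q ∈ P, p ≠ q → ∀ e, e ∈ p.walk.edges → e ∉ q.walk.edges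

/-- A nontrivial path starting at `s`. -/
structure SPath (G : Multigraph V E) (s : V) : Type (max u v) where
  last : V
  walk : G.Walk s last
  support_nodup : walk.support.Nodup
  edges_ne_nil : walk.edges ≠ []

/-- A system of pairwise edge-disjoint paths starting at `s`. -/
def SPathDisjoint (G : Multigraph V E) {s : V} (W : Set (G.SPath s)) : Prop :=
  ∀ p ∈ W, ∀ q ∈ W, p ≠ q → ∀ e, e ∈ p.walk.edges → e ∉ q.walk.edges

/-- The set of last edges of a system of paths starting at `s`. -/
def lastEdges (G : Multigraph V E) {s : V} (W : Set (G.SPath s)) : Set E :=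
  {e | ∃ p ∈ W, p.walk.edges.getLast? = some e}

/-- `C` is a cut separating `A` from `B`. -/
def SepCut (G : Multigraph V E) (A B : Set V) (C : Set E) : Prop :=
  ∃ X : Set V, A ⊆ X ∧ (∀ b ∈ B, b ∉ X) ∧ C = G.cut X

/-- `C` is a `⊆`-minimal cut separating `A` from `B`. -/
def IsMinSepCut (G : Multigraph V E) (A B : Set V) (C : Set E) : Prop :=
  G.SepCut A B C ∧ ∀ D : Set E, G.SepCut A B D → D ⊆ C → D = C

/-- An `s`-`B`-wave: a system of pairwise edge-disjoint paths starting at `s`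
whose set of last edges is a `⊆`-minimal cut separating `s` from `B`. -/
def IsWave (G : Multigraph V E) (s : V) (B : Set V) (W : Set (G.SPath s)) : Prop :=
  G.SPathDisjoint W ∧ G.IsMinSepCut {s} B (G.lastEdges W)

/-- An Erdős–Menger `st`-cut: an `st`-cut which is orthogonal to some system of
pairwise edge-disjoint `st`-paths, i.e. it consists of exactly one edge chosen
from each path of the system. -/
def IsEMCut (G : Multigraph V E) (s t : V) (C : Set E) : Prop :=
  (∃ X : Set V, s ∈ X ∧ t ∉ X ∧ C = G.cut X) ∧
  ∃ P : Set (G.STPath s t), G.STPathDisjoint P ∧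
    (∀ p ∈ P, ∃! e, e ∈ C ∧ e ∈ p.walk.edges) ∧
    (∀ e ∈ C, ∃ p ∈ P, e ∈ p.walk.edges)

/-- The order `≼` on `st`-cuts: the `s`-side of `C` is contained in the
`s`-side of `D` (in a connected graph the `s`-side is unique). -/
def CutLE (G : Multigraph V E) (s t : V) (C D : Set E) : Prop :=
  ∃ X Y : Set V, s ∈ X ∧ t ∉ X ∧ C = G.cut X ∧ s ∈ Y ∧ t ∉ Y ∧ D = G.cut Y ∧ X ⊆ Y

/-- A cut of the form `C_W` for some `st`-wave `W`. -/
def IsWaveCut (G : Multigraph V E) (s t : V) (C : Set E) : Prop :=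
  ∃ W : Set (G.SPath s), G.IsWave s {t} W ∧ G.lastEdges W = C

/-- Deletion of a set of edges. -/
def deleteEdges (G : Multigraph V E) (F : Set E) : Multigraph V {e : E // e ∉ F} where
  inc e := G.inc e.1
  not_isDiag e := G.not_isDiag e.1

open Classical in
/-- Contraction of the vertex set `X` to the vertex `s` (edges inside `X` are
deleted, edges leaving `X` are redirected to `s`). -/
noncomputable def contract (G : Multigraph V E) (X : Set V) (s : V) :
    Multigraph V {e : E // ¬ (Sym2.map (fun v => if v ∈ X then s else v) (G.inc e)).IsDiag} where
  inc e := Sym2.map (fun v => if v ∈ X then s else v) (G.inc e.1)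
  not_isDiag e := e.2

/-- Reachability inside a set `S` of vertices. -/
def ReachableIn (G : Multigraph V E) (S : Set V) (x y : V) : Prop :=
  ∃ p : G.Walk x y, ∀ z ∈ p.support, z ∈ S

/-- `Y` is (the vertex set of) a connected component of the subgraph of `G`
induced by `S`. -/
def IsComponentOf (G : Multigraph V E) (Y S : Set V) : Prop :=
  Y.Nonempty ∧ Y ⊆ S ∧ ∀ x ∈ Y, ∀ y ∈ S, (G.ReachableIn S x y ↔ y ∈ Y)

/-- A cycle in a multigraph (a closed walk with distinct edges whose
vertices are distinct except that the first one equals the last one). -/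
structure Cycle (G : Multigraph V E) : Type (max u v) where
  base : V
  walk : G.Walk base base
  edges_ne_nil : walk.edges ≠ []
  edges_nodup : walk.edges.Nodup
  support_tail_nodup : walk.support.tail.Nodup

/-- A graph is Eulerian if its edge set can be partitioned into
edge sets of cycles. -/
def IsEulerian (G : Multigraph V E) : Prop :=
  ∃ C : Set G.Cycle,
    (∀ c ∈ C, ∀ d ∈ C, c ≠ d → ∀ e, e ∈ c.walk.edges → e ∉ d.walk.edges) ∧
    ∀ e : E, ∃ c ∈ C, e ∈ c.walk.edges

/-- A `T`-partition: a family `{A t : t ∈ T}` of pairwise disjoint vertex sets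
with `A t ∩ T = {t}`. -/
def IsTPartition (T : Set V) (A : V → Set V) : Prop :=
  (∀ t ∈ T, A t ∩ T = {t}) ∧
  ∀ t₁ ∈ T, ∀ t₂ ∈ T, t₁ ≠ t₂ → Disjoint (A t₁) (A t₂)

end Multigraph

namespace Multigraph

variable {V : Type u} {E : Type v} {G : Multigraph V E}

namespace Walk

@[simp] lemma support_nil (v : V) : (Walk.nil v : G.Walk v v).support = [v] := rfl

@[simp] lemma support_cons {u v w : V} (e : E) (he : G.inc e = s(u, v)) (p : G.Walk v w) :
    (Walk.cons e he p).support = u :: p.support := rfl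

@[simp] lemma edges_nil (v : V) : (Walk.nil v : G.Walk v v).edges = [] := rfl

@[simp] lemma edges_cons {u v w : V} (e : E) (he : G.inc e = s(u, v)) (p : G.Walk v w) :
    (Walk.cons e he p).edges = e :: p.edges := rfl

lemma support_eq_cons : ∀ {u v : V} (p : G.Walk u v), p.support = u :: p.support.tail
  | _, _, .nil _ => rfl
  | _, _, .cons _ _ _ => rfl

lemma support_ne_nil {u v : V} (p : G.Walk u v) : p.support ≠ [] := by
  rw [support_eq_cons]; simp

lemma start_mem_support {u v : V} (p : G.Walk u v) : u ∈ p.support := by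
  rw [support_eq_cons]; simp

lemma end_mem_support : ∀ {u v : V} (p : G.Walk u v), v ∈ p.support
  | _, _, .nil v => by simp
  | _, _, .cons e he p => by simp [end_mem_support p]

/-- Concatenation of walks. -/
def append : ∀ {u v w : V}, G.Walk u v → G.Walk v w → G.Walk u w
  | _, _, _, .nil _, q => q
  | _, _, _, .cons e he p, q => .cons e he (p.append q)

@[simp] lemma nil_append {u w : V} (q : G.Walk u w) : (Walk.nil u).append q = q := rfl

@[simp] lemma cons_append {a u v w : V} (e : E) (he : G.inc e = s(a, u)) (p : G.Walk u v)
    (q : G.Walk v w) : (Walk.cons e he p).append q = .cons e he (p.append q) := rfl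

@[simp] lemma edges_append : ∀ {u v w : V} (p : G.Walk u v) (q : G.Walk v w),
    (p.append q).edges = p.edges ++ q.edges
  | _, _, _, .nil _, q => rfl
  | _, _, _, .cons e he p, q => by simp [edges_append p q]

@[simp] lemma support_append : ∀ {u v w : V} (p : G.Walk u v) (q : G.Walk v w),
    (p.append q).support = p.support ++ q.support.tail
  | _, _, _, .nil _, q => by simpa using support_eq_cons q
  | _, _, _, .cons e he p, q => by simp [support_append p q]

lemma mem_support_of_mem_edges : ∀ {u v : V} (p : G.Walk u v) {e : E} {x : V},
    e ∈ p.edges → x ∈ G.inc e → x ∈ p.support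
  | _, _, .nil _, e, x, he, _ => by simp at he
  | _, _, .cons e' h' p, e, x, he, hx => by
      rcases (by simpa using he : e = e' ∨ e ∈ p.edges) with rfl | hmem
      · rw [h'] at hx
        rcases Sym2.mem_iff.mp hx with rfl | rfl
        · simp
        · simp [start_mem_support p]
      · simp [mem_support_of_mem_edges p hmem hx]

lemma edges_nodup : ∀ {u v : V} (p : G.Walk u v), p.support.Nodup → p.edges.Nodup
  | _, _, .nil _, _ => by simp
  | _, _, .cons e' h' p, h => by
      simp only [support_cons, List.nodup_cons] at h
      refine List.nodup_cons.mpr ⟨fun hmem => ?_, edges_nodup p h.2⟩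
      exact h.1 (mem_support_of_mem_edges p hmem (by rw [h']; exact Sym2.mem_mk_left _ _))

lemma edges_ne_nil_of_ne : ∀ {u v : V}, u ≠ v → (p : G.Walk u v) → p.edges ≠ []
  | _, _, h, .nil _ => absurd rfl h
  | _, _, _, .cons _ _ _ => by simp

lemma end_mem_support_tail : ∀ {u v : V} (p : G.Walk u v), p.edges ≠ [] → v ∈ p.support.tail
  | _, _, .nil _, h => absurd rfl h
  | _, _, .cons e he p, _ => by simp [end_mem_support p]

lemma end_mem_inc_getLast : ∀ {u v : V} (p : G.Walk u v) {e : E},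
    p.edges.getLast? = some e → v ∈ G.inc e
  | _, _, .nil _, e, h => by simp at h
  | _, _, .cons e' h' (.nil _), e, h => by
      simp only [edges_cons, edges_nil, List.getLast?_singleton, Option.some_inj] at h
      subst h; rw [h']; exact Sym2.mem_mk_right _ _
  | _, _, .cons e' h' (.cons e'' h'' p), e, h => by
      apply end_mem_inc_getLast (Walk.cons e'' h'' p) (e := e)
      simp only [edges_cons] at h ⊢
      rwa [List.getLast?_cons_cons] at h

lemma start_mem_inc_head : ∀ {u v : V} (p : G.Walk u v) {e : E},
    p.edges.head? = some e → u ∈ G.inc e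
  | _, _, .nil _, e, h => by simp at h
  | _, _, .cons e' h' p, e, h => by
      simp only [edges_cons, List.head?_cons, Option.some_inj] at h
      subst h; rw [h']; exact Sym2.mem_mk_left _ _

lemma head?_edges : ∀ {u v : V} (p : G.Walk u v) {e : E}, p.support.Nodup →
    e ∈ p.edges → u ∈ G.inc e → p.edges.head? = some e
  | _, _, .nil _, e, _, he, _ => by simp at he
  | _, _, .cons e' h' p, e, hnd, he, hu => by
      simp only [support_cons, List.nodup_cons] at hnd
      rcases (by simpa using he : e = e' ∨ e ∈ p.edges) with rfl | hmem
      · simp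
      · exact absurd (mem_support_of_mem_edges p hmem hu) hnd.1

lemma getLast?_edges : ∀ {u v : V} (p : G.Walk u v) {e : E}, p.support.Nodup →
    e ∈ p.edges → v ∈ G.inc e → p.edges.getLast? = some e
  | _, _, .nil _, e, _, he, _ => by simp at he
  | _, _, .cons e' h' (.nil _), e, _, he, _ => by
      simp only [edges_cons, edges_nil] at he ⊢
      rcases (by simpa using he : e = e') with rfl
      simp
  | u, v, .cons e' h' (.cons e'' h'' p), e, hnd, he, hv => by
      rw [support_cons, List.nodup_cons] at hnd
      rcases (by simpa using he : e = e' ∨ e ∈ (Walk.cons e'' h'' p).edges) with rfl | hmem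
      · -- e is the first edge, with v ∈ inc e : contradiction with nodup
        exfalso
        rw [h'] at hv
        rcases Sym2.mem_iff.mp hv with h3 | h3
        · exact hnd.1 (h3 ▸ end_mem_support (Walk.cons e'' h'' p))
        · -- v is the middle vertex; the rest walk revisits it
          have h2 := hnd.2
          rw [support_cons, List.nodup_cons] at h2
          have h1 : v ∈ p.support := by
            have := end_mem_support_tail (Walk.cons e'' h'' p) (by simp)
            simpa using this
          exact h2.1 (h3 ▸ h1)
      · simp only [edges_cons, List.getLast?_cons_cons]
        have := getLast?_edges (Walk.cons e'' h'' p) hnd.2 hmem hv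
        simpa using this

lemma exists_split [DecidableEq V] : ∀ {u v : V} (p : G.Walk u v) (x : V), x ∈ p.support →
    ∃ (p₁ : G.Walk u x) (p₂ : G.Walk x v), p₁.append p₂ = p ∧ p₁.support.count x = 1
  | _, _, .nil w, x, h => by
      have hx : x = w := by simpa using h
      subst hx
      exact ⟨.nil x, .nil x, rfl, by simp⟩
  | u, v, .cons e he p, x, h => by
      by_cases hxu : x = u
      · subst hxu
        exact ⟨.nil x, .cons e he p, rfl, by simp⟩
      · have hx : x ∈ p.support := by
          rcases (by simpa using h : x = u ∨ x ∈ p.support) with h1 | h2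
          · exact absurd h1 hxu
          · exact h2
        obtain ⟨p₁, p₂, hap, hc⟩ := exists_split p x hx
        refine ⟨.cons e he p₁, p₂, by simp [hap], ?_⟩
        have hux : u ≠ x := fun hh => hxu hh.symm
        simp [List.count_cons, hc, hux]

lemma exists_cut : ∀ {a c : V} (w : G.Walk a c) (S : Set E), (∃ e ∈ w.edges, e ∈ S) →
    ∃ (y : V) (w₁ : G.Walk a y) (w₂ : G.Walk y c) (e : E),
      w₁.append w₂ = w ∧ w₁.edges.getLast? = some e ∧ e ∈ S ∧ ∀ d ∈ w₂.edges, d ∉ S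
  | _, _, .nil _, S, h => by simp at h
  | a, c, .cons e' he' w', S, h => by
      by_cases h2 : ∃ e ∈ w'.edges, e ∈ S
      · obtain ⟨y, w₁, w₂, e, h1, hl, h3, h4⟩ := exists_cut w' S h2
        refine ⟨y, .cons e' he' w₁, w₂, e, by simp [h1], ?_, h3, h4⟩
        rw [edges_cons, ← List.singleton_append, List.getLast?_append, hl]
        simp
      · have he'S : e' ∈ S := by
          obtain ⟨e, hmem, heS⟩ := h
          rcases (by simpa using hmem : e = e' ∨ e ∈ w'.edges) with rfl | hm
          · exact heS
          · exact absurd ⟨e, hm, heS⟩ h2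
        exact ⟨_, .cons e' he' (.nil _), w', e', rfl, by simp, he'S,
          fun d hd hdS => h2 ⟨d, hd, hdS⟩⟩

end Walk
end Multigraph
namespace Multigraph
variable {V : Type u} {E : Type v} {G : Multigraph V E}

lemma head?_append_of_ne_nil' {α : Type _} {l₁ l₂ : List α} (h : l₁ ≠ []) :
    (l₁ ++ l₂).head? = l₁.head? := by
  cases l₁ with
  | nil => exact absurd rfl h
  | cons a l => simp

lemma getLast?_append_of_ne_nil' {α : Type _} {l₁ l₂ : List α} (h : l₂ ≠ []) :
    (l₁ ++ l₂).getLast? = l₂.getLast? := by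
  rw [List.getLast?_append]
  cases h2 : l₂.getLast? with
  | none => exact absurd (List.getLast?_eq_none_iff.mp h2) h
  | some a => simp

lemma mem_of_getLast?_eq_some' {α : Type _} {l : List α} {a : α} (h : l.getLast? = some a) :
    a ∈ l := by
  cases l with
  | nil => simp at h
  | cons b L =>
      rw [List.getLast?_eq_getLast (l := b :: L) (by simp)] at h
      rw [← Option.some_inj.mp h]
      exact List.getLast_mem _

lemma mem_of_head?_eq_some' {α : Type _} {l : List α} {a : α} (h : l.head? = some a) :
    a ∈ l := by
  cases l with
  | nil => simp at h
  | cons b L => simp at h; simp [h]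

lemma count_eq_one_of_nodup_mem' {α : Type _} [DecidableEq α] {l : List α} {a : α}
    (hnd : l.Nodup) (ha : a ∈ l) : l.count a = 1 := by
  have h1 := List.nodup_iff_count_le_one.mp hnd a
  have h2 := List.count_pos_iff.mpr ha
  omega

namespace Walk

lemma exists_dedup [DecidableEq V] : ∀ (n : ℕ) {u v : V} (w : G.Walk u v),
    w.support.length ≤ n → w.support.count u = 1 → w.support.count v = 1 →
    ∃ p : G.Walk u v, p.support.Nodup ∧ p.edges.Sublist w.edges ∧
      p.edges.head? = w.edges.head? ∧ p.edges.getLast? = w.edges.getLast?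
  | 0, u, v, w, hlen, _, _ => by
      exfalso
      have h1 : 0 < w.support.length := List.length_pos_of_ne_nil (support_ne_nil w)
      omega
  | (n+1), u, v, w, hlen, hcu, hcv => by
      by_cases hnd : w.support.Nodup
      · exact ⟨w, hnd, List.Sublist.refl _, rfl, rfl⟩
      · obtain ⟨x, hx2⟩ : ∃ x, 2 ≤ w.support.count x := by
          by_contra hc
          push_neg at hc
          exact hnd (List.nodup_iff_count_le_one.mpr fun a => by have := hc a; omega)
        have hxmem : x ∈ w.support := List.count_pos_iff.mp (by omega)
        have hxu : x ≠ u := fun h => by rw [h] at hx2; omega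
        have hxv : x ≠ v := fun h => by rw [h] at hx2; omega
        obtain ⟨w₁, w₂, happ, hc1⟩ := exists_split w x hxmem
        have hsup : w.support = w₁.support ++ w₂.support.tail := by
          rw [← happ, support_append]
        have hxtail : x ∈ w₂.support.tail := by
          have := hx2
          rw [hsup, List.count_append, hc1] at this
          exact List.count_pos_iff.mp (by omega)
        cases w₂ with
        | nil => simp at hxtail
        | cons e₂ he₂ w₂' =>
          have hxw₂' : x ∈ w₂'.support := by simpa using hxtail
          obtain ⟨w₄, w₅, happ2, -⟩ := exists_split w₂' x hxw₂'
          have hsup2 : w₂'.support = w₄.support ++ w₅.support.tail := by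
            rw [← happ2, support_append]
          have hsupw : w.support = w₁.support ++ w₄.support ++ w₅.support.tail := by
            rw [hsup]
            simp [hsup2]
          have hsupw' : (w₁.append w₅).support = w₁.support ++ w₅.support.tail :=
            support_append _ _
          have hcnt : ∀ a : V, w.support.count a
              = w₁.support.count a + w₄.support.count a + w₅.support.tail.count a := by
            intro a
            rw [hsupw]
            simp only [List.count_append]
          -- length decrease
          have hlen4 : 0 < w₄.support.length := List.length_pos_of_ne_nil (support_ne_nil w₄)
          have hlenw : w.support.length = w₁.support.length + w₄.support.length
              + w₅.support.tail.length := by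
            rw [hsupw]; simp only [List.length_append]
          have hlen' : (w₁.append w₅).support.length ≤ n := by
            rw [hsupw', List.length_append]; omega
          -- counts for the shortened walk
          have humem : 0 < w₁.support.count u :=
            List.count_pos_iff.mpr (start_mem_support w₁)
          have hw₅e : w₅.edges ≠ [] := edges_ne_nil_of_ne hxv w₅
          have hvmem : 0 < w₅.support.tail.count v :=
            List.count_pos_iff.mpr (end_mem_support_tail w₅ hw₅e)
          have hcu' : (w₁.append w₅).support.count u = 1 := by
            rw [hsupw', List.count_append]
            have := hcnt u; rw [hcu] at this; omega
          have hcv' : (w₁.append w₅).support.count v = 1 := by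
            rw [hsupw', List.count_append]
            have := hcnt v; rw [hcv] at this; omega
          obtain ⟨p, hpnd, hpsub, hph, hpl⟩ := exists_dedup n (w₁.append w₅) hlen' hcu' hcv'
          -- edge list decompositions
          have hEw : w.edges = w₁.edges ++ (e₂ :: (w₄.edges ++ w₅.edges)) := by
            rw [← happ, ← happ2]
            simp
          have hEw' : (w₁.append w₅).edges = w₁.edges ++ w₅.edges := edges_append _ _
          have hE₁ : w₁.edges ≠ [] := edges_ne_nil_of_ne (fun h => hxu h.symm) w₁
          refine ⟨p, hpnd, ?_, ?_, ?_⟩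
          · refine hpsub.trans ?_
            rw [hEw', hEw]
            exact List.Sublist.append (List.Sublist.refl _)
              (List.Sublist.cons e₂ (List.sublist_append_right _ _))
          · rw [hph, hEw', hEw, head?_append_of_ne_nil' hE₁, head?_append_of_ne_nil' hE₁]
          · rw [hpl, hEw', hEw, getLast?_append_of_ne_nil' hw₅e,
              getLast?_append_of_ne_nil' (by simp : (e₂ :: (w₄.edges ++ w₅.edges)) ≠ []),
              ← List.singleton_append, getLast?_append_of_ne_nil'
                (by simp [hw₅e] : w₄.edges ++ w₅.edges ≠ []),
              getLast?_append_of_ne_nil' hw₅e]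

end Walk
end Multigraph
namespace Multigraph
variable {V : Type u} {E : Type v} {G : Multigraph V E} {s t : V}

def feO (p : G.STPath s t) : Option E := p.walk.edges.head?

def EMem (R : Set (G.STPath s t)) (e : E) : Prop := ∃ r ∈ R, e ∈ r.walk.edges

noncomputable def runQ (Q : Set (G.STPath s t)) (l : List E) : ℕ :=
  sSup {k | k ≤ l.length ∧ ∃ q ∈ Q, ∀ d ∈ l.drop (l.length - k), d ∈ q.walk.edges}

noncomputable def mu (Q : Set (G.STPath s t)) (r : G.STPath s t) : ℕ :=
  r.walk.edges.length - runQ Q r.walk.edges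

def Inv (P R : Set (G.STPath s t)) : Prop :=
  G.STPathDisjoint R ∧ ∀ p ∈ P, ∃ r ∈ R, feO r = feO p

def stle (Q X Y : Set (G.STPath s t)) : Prop :=
  ∀ r ∈ X, ∃ r' ∈ Y, feO r' = feO r ∧ (r' = r ∨ mu Q r' < mu Q r)

lemma stle_refl (Q X : Set (G.STPath s t)) : stle Q X X :=
  fun r hr => ⟨r, hr, rfl, Or.inl rfl⟩

lemma stle_trans {Q X Y Z : Set (G.STPath s t)} (h₁ : stle Q X Y) (h₂ : stle Q Y Z) :
    stle Q X Z := by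
  intro r hr
  obtain ⟨r', hr', hfe', hor'⟩ := h₁ r hr
  obtain ⟨r'', hr'', hfe'', hor''⟩ := h₂ r' hr'
  refine ⟨r'', hr'', hfe''.trans hfe', ?_⟩
  rcases hor' with rfl | hlt'
  · exact hor''
  · rcases hor'' with rfl | hlt''
    · exact Or.inr hlt'
    · exact Or.inr (hlt''.trans hlt')

lemma runQ_bddAbove (Q : Set (G.STPath s t)) (l : List E) :
    BddAbove {k | k ≤ l.length ∧ ∃ q ∈ Q, ∀ d ∈ l.drop (l.length - k), d ∈ q.walk.edges} :=
  ⟨l.length, fun _ hx => hx.1⟩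

lemma runQ_le_length (Q : Set (G.STPath s t)) (l : List E) : runQ Q l ≤ l.length := by
  by_cases h : {k | k ≤ l.length ∧ ∃ q ∈ Q, ∀ d ∈ l.drop (l.length - k), d ∈ q.walk.edges}.Nonempty
  · exact csSup_le h fun k hk => hk.1
  · rw [runQ, Set.not_nonempty_iff_eq_empty.mp h, csSup_empty]
    exact Nat.zero_le _

lemma runQ_ge {Q : Set (G.STPath s t)} {l : List E} {k : ℕ} {q : G.STPath s t}
    (hk : k ≤ l.length) (hq : q ∈ Q) (h : ∀ d ∈ l.drop (l.length - k), d ∈ q.walk.edges) :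
    k ≤ runQ Q l :=
  le_csSup (runQ_bddAbove Q l) ⟨hk, q, hq, h⟩

lemma runQ_mem {Q : Set (G.STPath s t)} {l : List E} (h : 1 ≤ runQ Q l) :
    ∃ q ∈ Q, ∀ d ∈ l.drop (l.length - runQ Q l), d ∈ q.walk.edges := by
  have hne : {k | k ≤ l.length ∧ ∃ q ∈ Q, ∀ d ∈ l.drop (l.length - k), d ∈ q.walk.edges}.Nonempty := by
    by_contra hc
    rw [runQ, Set.not_nonempty_iff_eq_empty.mp hc, csSup_empty] at h
    simp at h
  exact (Nat.sSup_mem hne (runQ_bddAbove Q l)).2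

lemma mu_eq_zero_of_mem {Q : Set (G.STPath s t)} {q : G.STPath s t} (hq : q ∈ Q) :
    mu Q q = 0 := by
  have h := runQ_ge (l := q.walk.edges) (le_refl _) hq (fun d hd => by
    simpa using (List.mem_of_mem_drop hd))
  rw [mu]
  omega

lemma edges_ne_nil' (hst : s ≠ t) (p : G.STPath s t) : p.walk.edges ≠ [] :=
  Walk.edges_ne_nil_of_ne hst p.walk

lemma feO_eq_some (hst : s ≠ t) (p : G.STPath s t) :
    ∃ a, feO p = some a ∧ a ∈ p.walk.edges := by
  have h := edges_ne_nil' hst p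
  refine ⟨p.walk.edges.head h, ?_, ?_⟩
  · exact List.head?_eq_head h
  · exact List.head_mem h

lemma fe_inj (hst : s ≠ t) {R : Set (G.STPath s t)} (hR : G.STPathDisjoint R)
    {r₁ r₂ : G.STPath s t} (h₁ : r₁ ∈ R) (h₂ : r₂ ∈ R) (hfe : feO r₁ = feO r₂) : r₁ = r₂ := by
  by_contra hne
  obtain ⟨a, ha, hamem⟩ := feO_eq_some hst r₁
  have ha₂ : a ∈ r₂.walk.edges := by
    rw [ha] at hfe
    exact mem_of_head?_eq_some' hfe.symm
  exact hR r₁ h₁ r₂ h₂ hne a hamem ha₂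

end Multigraph
namespace Multigraph
variable {V : Type u} {E : Type v} {G : Multigraph V E} {s t : V}

lemma augment (hst : s ≠ t) {P Q R : Set (G.STPath s t)} (hQd : G.STPathDisjoint Q)
    (hR : Inv P R) {q : G.STPath s t} (hq : q ∈ Q) {b : E}
    (hb : q.walk.edges.getLast? = some b) (hbM : ¬ EMem R b) :
    ∃ R', Inv P R' ∧ stle Q R R' ∧ ¬ stle Q R' R := by
  classical
  have hbq : b ∈ q.walk.edges := mem_of_getLast?_eq_some' hb
  by_cases hcase : ∃ e ∈ q.walk.edges, EMem R e
  · -- the "cut and splice" case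
    obtain ⟨y, w₁, w₂, e, happ, hlast1, heM, hw2⟩ := Walk.exists_cut q.walk (EMem R) hcase
    obtain ⟨r, hrR, her⟩ := heM
    have hqnd := q.support_nodup
    have hsupq : q.walk.support = w₁.support ++ w₂.support.tail := by
      rw [← happ, Walk.support_append]
    rw [hsupq, List.nodup_append] at hqnd
    have hE1ne : w₁.edges ≠ [] := by
      intro h0; rw [h0] at hlast1; simp at hlast1
    have hyinc : y ∈ G.inc e := Walk.end_mem_inc_getLast w₁ hlast1
    have hys : y ≠ s := by
      intro h0
      subst h0
      exact (List.nodup_cons.mp (by rw [← Walk.support_eq_cons w₁]; exact hqnd.1)).1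
        (Walk.end_mem_support_tail w₁ hE1ne)
    have hE2ne : w₂.edges ≠ [] := by
      intro h0
      have h1 : q.walk.edges.getLast? = some e := by
        rw [← happ, Walk.edges_append, h0, List.append_nil, hlast1]
      rw [hb] at h1
      exact hbM ⟨r, hrR, by rw [Option.some_inj.mp h1]; exact her⟩
    have hbw2 : w₂.edges.getLast? = some b := by
      rw [← happ, Walk.edges_append, getLast?_append_of_ne_nil' hE2ne] at hb
      exact hb
    have hbmem2 : b ∈ w₂.edges := mem_of_getLast?_eq_some' hbw2
    have hyt : y ≠ t := by
      intro h0
      subst h0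
      exact hqnd.2.2 _ (Walk.end_mem_support w₁) _ (Walk.end_mem_support_tail w₂ hE2ne) rfl
    -- split r at y
    have hyr : y ∈ r.walk.support := Walk.mem_support_of_mem_edges r.walk her hyinc
    obtain ⟨p₁, p₂, happr, -⟩ := Walk.exists_split r.walk y hyr
    have hndr := r.support_nodup
    have hsupr : r.walk.support = p₁.support ++ p₂.support.tail := by
      rw [← happr, Walk.support_append]
    rw [hsupr, List.nodup_append] at hndr
    have hnd₁ : p₁.support.Nodup := hndr.1
    have hnd₂ : p₂.support.Nodup := by
      rw [Walk.support_eq_cons p₂, List.nodup_cons]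
      exact ⟨fun hmem => hndr.2.2 _ (Walk.end_mem_support p₁) _ hmem rfl, hndr.2.1⟩
    have hEr : r.walk.edges = p₁.edges ++ p₂.edges := by
      rw [← happr, Walk.edges_append]
    have hEp₁ne : p₁.edges ≠ [] := Walk.edges_ne_nil_of_ne (fun h => hys h.symm) p₁
    have hEp₂ne : p₂.edges ≠ [] := Walk.edges_ne_nil_of_ne hyt p₂
    -- the new walk
    set w : G.Walk s t := p₁.append w₂ with hw
    have hsupw : w.support = p₁.support ++ w₂.support.tail := Walk.support_append _ _
    have hq_s_w1 : s ∈ w₁.support := Walk.start_mem_support w₁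
    have hcu : w.support.count s = 1 := by
      rw [hsupw, List.count_append]
      have h1 : p₁.support.count s = 1 :=
        count_eq_one_of_nodup_mem' hnd₁ (Walk.start_mem_support p₁)
      have h2 : w₂.support.tail.count s = 0 :=
        List.count_eq_zero_of_not_mem (fun hmem => hqnd.2.2 _ hq_s_w1 _ hmem rfl)
      omega
    have hcv : w.support.count t = 1 := by
      rw [hsupw, List.count_append]
      have h1 : p₁.support.count t = 0 :=
        List.count_eq_zero_of_not_mem
          (fun hmem => hndr.2.2 _ hmem _ (Walk.end_mem_support_tail p₂ hEp₂ne) rfl)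
      have h2 : w₂.support.tail.count t = 1 :=
        count_eq_one_of_nodup_mem' hqnd.2.1 (Walk.end_mem_support_tail w₂ hE2ne)
      omega
    obtain ⟨pw, hpwnd, hpwsub, hpwhead, hpwlast⟩ :=
      Walk.exists_dedup w.support.length w le_rfl hcu hcv
    rw [Walk.edges_append] at hpwsub hpwhead hpwlast
    set r'' : G.STPath s t := ⟨pw, hpwnd⟩ with hr''
    have hfe : feO r'' = feO r := by
      show pw.edges.head? = r.walk.edges.head?
      rw [hpwhead, hEr, head?_append_of_ne_nil' hEp₁ne, head?_append_of_ne_nil' hEp₁ne]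
    have hblast : pw.edges.getLast? = some b := by
      rw [hpwlast, getLast?_append_of_ne_nil' hE2ne, hbw2]
    have hbr'' : b ∈ r''.walk.edges := mem_of_getLast?_eq_some' hblast
    -- tail edges are in q and not in any member of R
    have hTq : ∀ d ∈ w₂.edges, d ∈ q.walk.edges := by
      intro d hd
      rw [← happ, Walk.edges_append]
      exact List.mem_append_right _ hd
    have heq : e ∈ q.walk.edges := by
      rw [← happ, Walk.edges_append]
      exact List.mem_append_left _ (mem_of_getLast?_eq_some' hlast1)
    -- μ strictly decreases
    have hmu : mu Q r'' < mu Q r := by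
      have hLnd : r.walk.edges.Nodup := Walk.edges_nodup r.walk r.support_nodup
      have hLne : r.walk.edges ≠ [] := edges_ne_nil' hst r
      have hkL : runQ Q r.walk.edges ≤ r.walk.edges.length := runQ_le_length Q r.walk.edges
      have hmur : mu Q r = r.walk.edges.length - runQ Q r.walk.edges := rfl
      have hmur'' : mu Q r'' = pw.edges.length - runQ Q pw.edges := rfl
      have hlenL : r.walk.edges.length = p₁.edges.length + p₂.edges.length := by
        rw [hEr, List.length_append]
      have hnotin : 1 ≤ runQ Q r.walk.edges → e ∉ r.walk.edges.drop (r.walk.edges.length - runQ Q r.walk.edges) := by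
        intro hk1 hedrop
        obtain ⟨q', hq', hsubq'⟩ := runQ_mem hk1
        have hdropne : r.walk.edges.drop (r.walk.edges.length - runQ Q r.walk.edges) ≠ [] := by
          intro h0
          have h1 : (r.walk.edges.drop (r.walk.edges.length - runQ Q r.walk.edges)).length = runQ Q r.walk.edges := by
            rw [List.length_drop]; omega
          rw [h0] at h1; simp at h1; omega
        have hflast : r.walk.edges.getLast? = some (r.walk.edges.getLast hLne) := List.getLast?_eq_getLast hLne
        have h1 : r.walk.edges.getLast? = (r.walk.edges.drop (r.walk.edges.length - runQ Q r.walk.edges)).getLast? := by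
          conv_lhs => rw [← List.take_append_drop (r.walk.edges.length - runQ Q r.walk.edges) r.walk.edges]
          rw [getLast?_append_of_ne_nil' hdropne]
        have hfmem : r.walk.edges.getLast hLne ∈ r.walk.edges.drop (r.walk.edges.length - runQ Q r.walk.edges) :=
          mem_of_getLast?_eq_some' (by rw [← h1]; exact hflast)
        have hfq' : r.walk.edges.getLast hLne ∈ q'.walk.edges := hsubq' _ hfmem
        have htinc : t ∈ G.inc (r.walk.edges.getLast hLne) := Walk.end_mem_inc_getLast r.walk hflast
        have hq'last : q'.walk.edges.getLast? = some (r.walk.edges.getLast hLne) :=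
          Walk.getLast?_edges q'.walk q'.support_nodup hfq' htinc
        have hq'q : q' ≠ q := by
          intro h0
          subst h0
          rw [hb] at hq'last
          exact hbM ⟨r, hrR, by rw [Option.some_inj.mp hq'last]; exact List.getLast_mem hLne⟩
        exact hQd q' hq' q hq hq'q e (hsubq' e hedrop) heq
      obtain ⟨U, W, hUW, hU, hW⟩ := List.sublist_append_iff.mp hpwsub
      have hlenpw : pw.edges.length = U.length + W.length := by
        rw [hUW, List.length_append]
      have hWq : ∀ d ∈ W, d ∈ q.walk.edges := fun d hd => hTq d (hW.subset hd)
      have hrunW : W.length ≤ runQ Q pw.edges := by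
        refine runQ_ge (by omega) hq ?_
        intro d hd
        have h2 : pw.edges.drop (pw.edges.length - W.length) = W := by
          rw [hUW, List.length_append, show U.length + W.length - W.length = U.length by omega]
          exact List.drop_left
        exact hWq d (h2 ▸ hd)
      have hrle := runQ_le_length Q pw.edges
      rcases List.mem_append.mp (by rw [← hEr]; exact her) with hA | hB
      · -- Case A : e lies in the prefix p₁
        have hAlast : p₁.edges.getLast? = some e := Walk.getLast?_edges p₁ hnd₁ hA hyinc
        have hgl : p₁.edges.getLast hEp₁ne = e := by
          have h2 := List.getLast?_eq_getLast hEp₁ne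
          rw [h2] at hAlast
          exact Option.some_inj.mp hAlast
        have hp₁e : p₁.edges = p₁.edges.dropLast ++ [e] := by
          conv_lhs => rw [← List.dropLast_append_getLast hEp₁ne]
          rw [hgl]
        have hLpnd : p₁.edges.Nodup := (List.nodup_append.mp (by rw [← hEr]; exact hLnd)).1
        have hLp1 : 1 ≤ p₁.edges.length := List.length_pos_of_ne_nil hEp₁ne
        have hdll : p₁.edges.dropLast.length = p₁.edges.length - 1 := List.length_dropLast
        have hkLs : runQ Q r.walk.edges ≤ p₂.edges.length := by
          by_contra hcon
          push_neg at hcon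
          have hk1 : 1 ≤ runQ Q r.walk.edges := by omega
          refine hnotin hk1 ?_
          have hn : r.walk.edges.length - runQ Q r.walk.edges ≤ p₁.edges.dropLast.length := by
            omega
          have h5 : r.walk.edges.drop (r.walk.edges.length - runQ Q r.walk.edges)
              = p₁.edges.drop (r.walk.edges.length - runQ Q r.walk.edges) ++ p₂.edges := by
            rw [show r.walk.edges.drop (r.walk.edges.length - runQ Q r.walk.edges)
                = (p₁.edges ++ p₂.edges).drop (r.walk.edges.length - runQ Q r.walk.edges)
              from congrArg _ hEr]
            exact List.drop_append_of_le_length (by omega)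
          rw [h5]
          refine List.mem_append_left _ ?_
          have h6 : p₁.edges.drop (r.walk.edges.length - runQ Q r.walk.edges)
              = p₁.edges.dropLast.drop (r.walk.edges.length - runQ Q r.walk.edges) ++ [e] := by
            rw [show p₁.edges.drop (r.walk.edges.length - runQ Q r.walk.edges)
                = (p₁.edges.dropLast ++ [e]).drop (r.walk.edges.length - runQ Q r.walk.edges)
              from congrArg _ hp₁e]
            exact List.drop_append_of_le_length hn
          rw [h6]
          exact List.mem_append_right _ (by simp)
        rw [hp₁e] at hU
        obtain ⟨u₁, u₂, hu12, hu1, hu2⟩ := List.sublist_append_iff.mp hU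
        have hu1len : u₁.length ≤ p₁.edges.dropLast.length := hu1.length_le
        by_cases heU : e ∈ U
        · have hu2' : u₂ = [e] := by
            rcases List.sublist_singleton.mp hu2 with h2 | h2
            · exfalso
              rw [h2, List.append_nil] at hu12
              have hednd : e ∉ p₁.edges.dropLast := by
                have h3 : (p₁.edges.dropLast ++ [e]).Nodup := by rw [← hp₁e]; exact hLpnd
                exact fun hmem => (List.nodup_append.mp h3).2.2 _ hmem _ (by simp) rfl
              exact hednd (hu1.subset (hu12 ▸ heU))
            · exact h2
          have hpweq : pw.edges = u₁ ++ (e :: W) := by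
            rw [hUW, hu12, hu2', List.append_assoc, List.singleton_append]
          have hrun1 : W.length + 1 ≤ runQ Q pw.edges := by
            refine runQ_ge (by rw [hpweq, List.length_append, List.length_cons]; omega) hq ?_
            intro d hd
            have h2 : pw.edges.drop (pw.edges.length - (W.length + 1)) = e :: W := by
              rw [hpweq, List.length_append, List.length_cons,
                show u₁.length + (W.length + 1) - (W.length + 1) = u₁.length by omega]
              exact List.drop_left
            rw [h2] at hd
            rcases List.mem_cons.mp hd with rfl | hdW
            · exact heq
            · exact hWq d hdW
          have hlenpw2 : pw.edges.length = u₁.length + 1 + W.length := by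
            rw [hpweq]; simp; omega
          rw [hmur, hmur'']
          omega
        · have hu2' : u₂ = [] := by
            rcases List.sublist_singleton.mp hu2 with h2 | h2
            · exact h2
            · exact absurd (by rw [hu12, h2]; exact List.mem_append_right _ (by simp)) heU
          rw [hu2', List.append_nil] at hu12
          have hUlen : U.length ≤ p₁.edges.dropLast.length := by rw [hu12]; exact hu1len
          rw [hmur, hmur'']
          omega
      · -- Case B : e lies in the suffix p₂
        have hLs1 : 1 ≤ p₂.edges.length := List.length_pos_of_ne_nil hEp₂ne
        have hkLs : runQ Q r.walk.edges < p₂.edges.length := by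
          by_contra hcon
          push_neg at hcon
          have hk1 : 1 ≤ runQ Q r.walk.edges := by omega
          refine hnotin hk1 ?_
          have h5 : r.walk.edges.drop (r.walk.edges.length - runQ Q r.walk.edges)
              = p₁.edges.drop (r.walk.edges.length - runQ Q r.walk.edges) ++ p₂.edges := by
            rw [show r.walk.edges.drop (r.walk.edges.length - runQ Q r.walk.edges)
                = (p₁.edges ++ p₂.edges).drop (r.walk.edges.length - runQ Q r.walk.edges)
              from congrArg _ hEr]
            exact List.drop_append_of_le_length (by omega)
          rw [h5]
          exact List.mem_append_right _ hB
        have hUlen : U.length ≤ p₁.edges.length := hU.length_le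
        rw [hmur, hmur'']
        omega
    -- the new system
    refine ⟨insert r'' (R \ {r}), ⟨?_, ?_⟩, ?_, ?_⟩
    · -- pairwise edge-disjointness
      intro a ha c hc hac f hfa
      have hsub : ∀ g ∈ pw.edges, g ∈ p₁.edges ∨ g ∈ w₂.edges := by
        intro g hg
        exact List.mem_append.mp (hpwsub.mem hg)
      rcases ha with rfl | ⟨haR, hanr⟩
      · rcases hc with rfl | ⟨hcR, hcnr⟩
        · exact absurd rfl hac
        · intro hfc
          rcases hsub f hfa with h1 | h2
          · have hfr : f ∈ r.walk.edges := by rw [hEr]; exact List.mem_append_left _ h1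
            exact hR.1 r hrR c hcR (fun h => hcnr (by simp [h.symm])) f hfr hfc
          · exact hw2 f h2 ⟨c, hcR, hfc⟩
      · rcases hc with rfl | ⟨hcR, hcnr⟩
        · intro hfc
          rcases hsub f hfc with h1 | h2
          · have hfr : f ∈ r.walk.edges := by rw [hEr]; exact List.mem_append_left _ h1
            exact hR.1 a haR r hrR (fun h => hanr (by simp [h])) f hfa hfr
          · exact hw2 f h2 ⟨a, haR, hfa⟩
        · exact hR.1 a haR c hcR hac f hfa
    · -- first edges are preserved
      intro p hp
      obtain ⟨rr, hrrm, hferr⟩ := hR.2 p hp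
      by_cases hrr : rr = r
      · exact ⟨r'', Set.mem_insert _ _, by rw [hfe, ← hrr, hferr]⟩
      · exact ⟨rr, Set.mem_insert_of_mem _ ⟨hrrm, hrr⟩, hferr⟩
    · -- R ≤ R'
      intro m hm
      by_cases hmr : m = r
      · subst hmr
        exact ⟨r'', Set.mem_insert _ _, hfe, Or.inr hmu⟩
      · exact ⟨m, Set.mem_insert_of_mem _ ⟨hm, hmr⟩, rfl, Or.inl rfl⟩
    · -- ¬ R' ≤ R
      intro hle
      obtain ⟨rr, hrrR, hferr, hor⟩ := hle r'' (Set.mem_insert _ _)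
      have hrrr : rr = r := fe_inj hst hR.1 hrrR hrR (hferr.trans hfe)
      subst hrrr
      rcases hor with h1 | h2
      · exact hbM ⟨rr, hrrR, by rw [h1]; exact hbr''⟩
      · omega
  · -- the "wholesale" case : q is edge-disjoint from R
    push_neg at hcase
    have hqR : q ∉ R := fun hqmem => hbM ⟨q, hqmem, hbq⟩
    refine ⟨insert q R, ⟨?_, ?_⟩, ?_, ?_⟩
    · intro a ha c hc hac f hfa
      rcases ha with rfl | haR
      · rcases hc with rfl | hcR
        · exact absurd rfl hac
        · intro hfc
          exact hcase f hfa ⟨c, hcR, hfc⟩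
      · rcases hc with rfl | hcR
        · intro hfc
          exact hcase f hfc ⟨a, haR, hfa⟩
        · exact hR.1 a haR c hcR hac f hfa
    · intro p hp
      obtain ⟨rr, hrr, hferr⟩ := hR.2 p hp
      exact ⟨rr, Set.mem_insert_of_mem _ hrr, hferr⟩
    · intro m hm
      exact ⟨m, Set.mem_insert_of_mem _ hm, rfl, Or.inl rfl⟩
    · intro hle
      obtain ⟨rr, hrrR, hferr, hor⟩ := hle q (Set.mem_insert _ _)
      rcases hor with h1 | h2
      · exact hqR (h1 ▸ hrrR)
      · rw [mu_eq_zero_of_mem hq] at h2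
        omega

end Multigraph
namespace Multigraph
variable {V : Type u} {E : Type v} {G : Multigraph V E} {s t : V}

lemma chain_ub (hst : s ≠ t) {P Q : Set (G.STPath s t)} (hP : G.STPathDisjoint P)
    (c : Set {R : Set (G.STPath s t) // Inv P R})
    (hc : IsChain (fun X Y => stle Q X.1 Y.1) c) :
    ∃ ub : {R : Set (G.STPath s t) // Inv P R}, ∀ X ∈ c, stle Q X.1 ub.1 := by
  classical
  rcases c.eq_empty_or_nonempty with rfl | hne
  · exact ⟨⟨P, hP, fun p hp => ⟨p, hp, rfl⟩⟩, by simp⟩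
  · set Rb : Set (G.STPath s t) :=
      {r | (∃ X ∈ c, r ∈ X.1) ∧ ∀ X' ∈ c, ∀ r' ∈ X'.1, feO r' = feO r → mu Q r ≤ mu Q r'}
      with hRb
    have hcomp : ∀ X ∈ c, ∀ Y ∈ c, stle Q X.1 Y.1 ∨ stle Q Y.1 X.1 := by
      intro X hX Y hY
      by_cases hxy : X = Y
      · subst hxy; exact Or.inl (stle_refl Q X.1)
      · exact hc hX hY hxy
    have hRbmem : ∀ X ∈ c, ∀ r ∈ X.1, ∃ rm ∈ Rb, feO rm = feO r ∧ mu Q rm ≤ mu Q r := by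
      intro X hX r hr
      have hKne : {n | ∃ X' ∈ c, ∃ r' ∈ X'.1, feO r' = feO r ∧ mu Q r' = n}.Nonempty :=
        ⟨mu Q r, X, hX, r, hr, rfl, rfl⟩
      obtain ⟨X', hX', r', hr', hfe', hmu'⟩ := Nat.sInf_mem hKne
      refine ⟨r', ⟨⟨X', hX', hr'⟩, ?_⟩, hfe', ?_⟩
      · intro X'' hX'' r'' hr'' hfe''
        rw [hmu']
        exact Nat.sInf_le ⟨X'', hX'', r'', hr'', hfe''.trans hfe', rfl⟩
      · rw [hmu']
        exact Nat.sInf_le ⟨X, hX, r, hr, rfl, rfl⟩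
    have hmemY : ∀ rm ∈ Rb, ∀ X ∈ c, rm ∈ X.1 → ∀ Y ∈ c, stle Q X.1 Y.1 → rm ∈ Y.1 := by
      intro rm hrm X hX hrX Y hY hXY
      obtain ⟨r'', hr'', hfe'', hor⟩ := hXY rm hrX
      rcases hor with rfl | hlt
      · exact hr''
      · have := hrm.2 Y hY r'' hr'' hfe''
        omega
    have hub : ∀ X ∈ c, ∀ r ∈ X.1, ∃ r' ∈ Rb, feO r' = feO r ∧ (r' = r ∨ mu Q r' < mu Q r) := by
      intro X hX r hr
      obtain ⟨rm, hrm, hfe, hle⟩ := hRbmem X hX r hr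
      rcases Nat.lt_or_ge (mu Q rm) (mu Q r) with hlt | hge
      · exact ⟨rm, hrm, hfe, Or.inr hlt⟩
      · obtain ⟨X', hX', hrX'⟩ := hrm.1
        rcases hcomp X hX X' hX' with hXY | hYX
        · obtain ⟨r'', hr'', hfe'', hor⟩ := hXY r hr
          have heq : r'' = rm := fe_inj hst X'.2.1 hr'' hrX' (hfe''.trans hfe.symm)
          subst heq
          exact ⟨r'', hrm, hfe, hor⟩
        · have hrmX : rm ∈ X.1 := hmemY rm hrm X' hX' hrX' X hX hYX
          have heq : rm = r := fe_inj hst X.2.1 hrmX hr hfe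
          exact ⟨rm, hrm, hfe, Or.inl heq⟩
    have hdisj : G.STPathDisjoint Rb := by
      intro r₁ h₁ r₂ h₂ hne12 f hf₁
      obtain ⟨X₁, hX₁, hr₁⟩ := h₁.1
      obtain ⟨X₂, hX₂, hr₂⟩ := h₂.1
      rcases hcomp X₁ hX₁ X₂ hX₂ with h12 | h21
      · have hmem : r₁ ∈ X₂.1 := hmemY r₁ h₁ X₁ hX₁ hr₁ X₂ hX₂ h12
        exact X₂.2.1 r₁ hmem r₂ hr₂ hne12 f hf₁
      · have hmem : r₂ ∈ X₁.1 := hmemY r₂ h₂ X₂ hX₂ hr₂ X₁ hX₁ h21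
        exact X₁.2.1 r₁ hr₁ r₂ hmem hne12 f hf₁
    obtain ⟨X₀, hX₀⟩ := hne
    have hI2 : ∀ p ∈ P, ∃ r ∈ Rb, feO r = feO p := by
      intro p hp
      obtain ⟨r, hr, hfe⟩ := X₀.2.2 p hp
      obtain ⟨rm, hrm, hfe', -⟩ := hRbmem X₀ hX₀ r hr
      exact ⟨rm, hrm, hfe'.trans hfe⟩
    exact ⟨⟨Rb, hdisj, hI2⟩, fun X hX r hr => hub X hX r hr⟩

end Multigraph


/-- **Diestel–Thomassen theorem.** Given two systems `P`, `Q` of pairwise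
edge-disjoint `st`-paths there is a system `R` of pairwise edge-disjoint
`st`-paths with `δ_R(s) ⊇ δ_P(s)` and `δ_R(t) ⊇ δ_Q(t)`. -/
theorem diestel_thomassen {V : Type u} {E : Type v} (G : Multigraph V E)
    (s t : V) (hst : s ≠ t) (P Q : Set (G.STPath s t))
    (hP : G.STPathDisjoint P) (hQ : G.STPathDisjoint Q) :
    ∃ R : Set (G.STPath s t), G.STPathDisjoint R ∧
      (∀ e ∈ G.inci s, (∃ p ∈ P, e ∈ p.walk.edges) → ∃ r ∈ R, e ∈ r.walk.edges) ∧
      (∀ e ∈ G.inci t, (∃ q ∈ Q, e ∈ q.walk.edges) → ∃ r ∈ R, e ∈ r.walk.edges) := by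
  classical
  obtain ⟨M, hM⟩ := exists_maximal_of_chains_bounded
    (r := fun (X Y : {R : Set (G.STPath s t) // Multigraph.Inv P R}) =>
      Multigraph.stle Q X.1 Y.1)
    (fun c hc => (Multigraph.chain_ub hst hP c hc).imp (fun ub h => fun a ha => h a ha))
    (fun hab hbc => Multigraph.stle_trans hab hbc)
  refine ⟨M.1, M.2.1, ?_, ?_⟩
  · rintro e he ⟨p, hp, hep⟩
    have h1 : Multigraph.feO p = some e :=
      Multigraph.Walk.head?_edges p.walk p.support_nodup hep he
    obtain ⟨r, hrM, hfe⟩ := M.2.2 p hp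
    refine ⟨r, hrM, Multigraph.mem_of_head?_eq_some' (l := r.walk.edges) ?_⟩
    rw [← h1]
    exact hfe
  · rintro e he ⟨q, hq, heq⟩
    by_contra hcon
    have hbM : ¬ Multigraph.EMem M.1 e := hcon
    have hb : q.walk.edges.getLast? = some e :=
      Multigraph.Walk.getLast?_edges q.walk q.support_nodup heq he
    obtain ⟨R', hInv', hle, hnle⟩ := Multigraph.augment hst hQ M.2 hq hb hbM
    exact hnle (hM ⟨R', hInv'⟩ hle)
end

section
/- Let G be a (possibly infinite) graph and T ⊆ V(G) such that there is no X ⊆ V(G)∖T with d_G(X) an odd natural number, and let P be a T-path in G. Then the graph G − E(P) obtained by deleting the edges of P also has no X ⊆ V(G)∖T with d_{G−E(P)}(X) an odd natural number. -/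
/-!
Common definitions: multigraphs (parallel edges allowed, no loops), walks,
paths, cuts, waves and related notions used in the statements below.
-/

universe u v

namespace Multigraph
variable {V : Type u} {E : Type v}
variable {G : Multigraph V E}

lemma Walk.start_mem_support_s13 : ∀ {u w : V} (p : G.Walk u w), u ∈ p.support
  | _, _, .nil v => List.mem_singleton.2 rfl
  | _, _, .cons _ _ _ => List.mem_cons_self

lemma mem_cut_iff {X : Set V} {e : E} {u v : V} (he : G.inc e = s(u, v)) :
    e ∈ G.cut X ↔ (u ∈ X ∧ v ∉ X) ∨ (v ∈ X ∧ u ∉ X) := by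
  constructor
  · rintro ⟨x, y, hxy, hx, hy⟩
    rw [he, Sym2.eq_iff] at hxy
    rcases hxy with ⟨rfl, rfl⟩ | ⟨rfl, rfl⟩
    · exact Or.inl ⟨hx, hy⟩
    · exact Or.inr ⟨hx, hy⟩
  · rintro (⟨hx, hy⟩ | ⟨hx, hy⟩)
    · exact ⟨u, v, he, hx, hy⟩
    · exact ⟨v, u, he.trans Sym2.eq_swap, hx, hy⟩

lemma Walk.mem_support_of_mem_edges_s13 :
    ∀ {u w : V} (p : G.Walk u w) {f : E} {x : V},
      f ∈ p.edges → x ∈ G.inc f → x ∈ p.support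
  | _, _, .nil _, _, _, hf, _ => by simp [Walk.edges] at hf
  | u, w, .cons e he q, f, x, hf, hx => by
    rcases List.mem_cons.1 hf with rfl | hf
    · rw [he, Sym2.mem_iff] at hx
      rcases hx with rfl | rfl
      · exact List.mem_cons_self
      · exact List.mem_cons_of_mem _ q.start_mem_support_s13
    · exact List.mem_cons_of_mem _ (q.mem_support_of_mem_edges_s13 hf hx)

lemma Walk.edges_nodup_of_support_nodup :
    ∀ {u w : V} (p : G.Walk u w), p.support.Nodup → p.edges.Nodup
  | _, _, .nil _, _ => List.nodup_nil
  | u, w, .cons e he q, h => by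
    rw [Walk.support, List.nodup_cons] at h
    refine List.nodup_cons.2 ⟨fun hmem => h.1 ?_, q.edges_nodup_of_support_nodup h.2⟩
    exact q.mem_support_of_mem_edges_s13 hmem (by rw [he]; exact Sym2.mem_mk_left u _)

open Classical in
lemma Walk.even_countP_cut (X : Set V) :
    ∀ {u w : V} (p : G.Walk u w),
      (p.edges.countP (fun e => decide (e ∈ G.cut X))
        + (if u ∈ X then 1 else 0) + (if w ∈ X then 1 else 0)) % 2 = 0
  | _, _, .nil v => by by_cases h : v ∈ X <;> simp [Walk.edges, h]
  | u, w, .cons (v := v) e he q => by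
    have IH := q.even_countP_cut (X := X)
    rw [Walk.edges, List.countP_cons]
    have hcut := mem_cut_iff (X := X) he
    by_cases hu : u ∈ X <;> by_cases hv : v ∈ X <;> by_cases hw : w ∈ X <;>
      by_cases hec : e ∈ G.cut X <;>
      first
      | (exfalso; rw [hcut] at hec; tauto)
      | (simp only [hu, hv, hw, hec, if_true, if_false, decide_true, decide_false,
          Bool.false_eq_true, ite_true, ite_false, not_false_iff] at IH ⊢ <;> omega)

end Multigraph

/-- Deleting the edges of a `T`-path preserves the property that no
`X ⊆ V ∖ T` has odd finite cut. -/
theorem delete_TPath_preserves_innerEulerian {V : Type u} {E : Type v}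
    (G : Multigraph V E) (T : Set V)
    (hEul : ∀ X : Set V, X ⊆ Tᶜ → ¬ ((G.cut X).Finite ∧ Odd (G.cut X).ncard))
    (P : G.TPath T) :
    ∀ X : Set V, X ⊆ Tᶜ →
      ¬ (((G.deleteEdges {e | e ∈ P.walk.edges}).cut X).Finite ∧
        Odd ((G.deleteEdges {e | e ∈ P.walk.edges}).cut X).ncard) := by
  
  classical
  intro X hX
  rintro ⟨hfin, hodd⟩
  set F : Set E := {e | e ∈ P.walk.edges} with hF
  have himg : Subtype.val '' ((G.deleteEdges F).cut X) = G.cut X \ F := by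
    ext e
    constructor
    · rintro ⟨⟨e, heF⟩, ⟨x, y, hxy, hx, hy⟩, rfl⟩
      exact ⟨⟨x, y, hxy, hx, hy⟩, heF⟩
    · rintro ⟨⟨x, y, hxy, hx, hy⟩, heF⟩
      exact ⟨⟨e, heF⟩, ⟨x, y, hxy, hx, hy⟩, rfl⟩
  have hfinD : (G.cut X \ F).Finite := himg ▸ hfin.image _
  have hcardD : (G.cut X \ F).ncard = ((G.deleteEdges F).cut X).ncard := by
    rw [← himg, Set.ncard_image_of_injective _ Subtype.val_injective]
  set L := P.walk.edges.filter (fun e => decide (e ∈ G.cut X)) with hL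
  have hLnodup : L.Nodup :=
    (P.walk.edges_nodup_of_support_nodup P.support_nodup).filter _
  have hinter : G.cut X ∩ F = ↑L.toFinset := by
    ext e
    simp only [Set.mem_inter_iff, hL, List.coe_toFinset, List.mem_filter, Set.mem_setOf_eq,
      decide_eq_true_eq, hF]
    exact and_comm
  have hfinI : (G.cut X ∩ F).Finite := hinter ▸ (L.toFinset : Finset E).finite_toSet
  have hfinG : (G.cut X).Finite := by
    rw [← Set.diff_union_inter (G.cut X) F]
    exact hfinD.union hfinI
  have hcardI : (G.cut X ∩ F).ncard = L.length := by
    rw [hinter, Set.ncard_coe_finset, List.toFinset_card_of_nodup hLnodup]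
  have heven : L.length % 2 = 0 := by
    have h := P.walk.even_countP_cut (X := X)
    have h1 : P.first ∉ X := fun hx => hX hx P.first_mem
    have h2 : P.last ∉ X := fun hx => hX hx P.last_mem
    rw [if_neg h1, if_neg h2, List.countP_eq_length_filter] at h
    simpa using h
  have hsum : (G.cut X).ncard = (G.cut X \ F).ncard + (G.cut X ∩ F).ncard := by
    rw [← Set.ncard_union_eq Set.disjoint_sdiff_inter hfinD hfinI, Set.diff_union_inter]
  refine hEul X hX ⟨hfinG, ?_⟩
  rw [Nat.odd_iff] at hodd ⊢
  omega
end
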